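/- Let (d_i)_{i∈ℕ} be a countable family of open sets covering a space B, and suppose λ ⊆ B × [0,1] is a closed set such that for each i there is a closed set T_i ⊆ [0,1] with λ ∩ (d_i × [0,1]) = d_i × T_i. Then λ' = ⋃_i (d_i × ∂T_i) defines a set whose intersection with each d_i × [0,1] is a product d_i × S_i with S_i closed and totally disconnected; in particular λ' is locally a product by a totally disconnected transversal (a codimension-one lamination structure). -/
import Mathlib

lemma empty_interior_totallyDisconnected {S : Set ℝ} (h : interior S = ∅) :
    IsTotallyDisconnected S := by
  intro t hts hconn x hx y hy
  by_contra hxy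
  have hoc := hconn.ordConnected
  have main : ∀ a b : ℝ, a ∈ t → b ∈ t → a < b → False := by
    intro a b ha hb hlt
    have hsub : Set.Icc a b ⊆ S := fun z hz => hts (hoc.out ha hb hz)
    have : (Set.Ioo a b : Set ℝ) ⊆ interior S :=
      interior_maximal (fun z hz => hsub ⟨hz.1.le, hz.2.le⟩) isOpen_Ioo
    rw [h, Set.subset_empty_iff] at this
    exact (Set.nonempty_Ioo.2 hlt).ne_empty this
  rcases lt_trichotomy x y with hlt | heq | hlt
  · exact main x y hx hy hlt
  · exact hxy heq
  · exact main y x hy hx hlt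

/-- if over each chart `d i` of a countable open cover of `B` a
closed set `λ ⊆ B × [0,1]` is a product `d i × T i` with `T i` closed, then the
set `λ' = ⋃ i, d i × ∂(T i)` intersects each `d i × [0,1]` in a product
`d i × S i` with `S i` closed and totally disconnected: `λ'` is locally a product
by a totally disconnected transversal, i.e. a codimension-one lamination. -/
theorem stmt9 {B : Type*} [TopologicalSpace B]
    (d : ℕ → Set B) (hopen : ∀ i, IsOpen (d i)) (hcover : (⋃ i, d i) = Set.univ)
    (lam : Set (B × ℝ)) (hclosed : IsClosed lam)
    (hsub : lam ⊆ Set.univ ×ˢ Set.Icc (0 : ℝ) 1)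
    (T : ℕ → Set ℝ) (hT : ∀ i, IsClosed (T i))
    (hprod : ∀ i, lam ∩ (d i ×ˢ Set.Icc (0 : ℝ) 1) = d i ×ˢ T i) :
    ∀ i, ∃ S : Set ℝ, IsClosed S ∧ IsTotallyDisconnected S ∧
      (⋃ j, d j ×ˢ frontier (T j)) ∩ (d i ×ˢ Set.Icc (0 : ℝ) 1) = d i ×ˢ S := by
  -- key: on overlaps, the transversals agree
  have key : ∀ i j, ∀ x : B, x ∈ d i → x ∈ d j → T i ⊆ T j := by
    intro i j x hxi hxj z hz
    have hmem : (x, z) ∈ d i ×ˢ T i := ⟨hxi, hz⟩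
    rw [← hprod i] at hmem
    have hzIcc : z ∈ Set.Icc (0 : ℝ) 1 := (hsub hmem.1).2
    have : (x, z) ∈ lam ∩ (d j ×ˢ Set.Icc (0 : ℝ) 1) := ⟨hmem.1, hxj, hzIcc⟩
    rw [hprod j] at this
    exact this.2
  intro i
  rcases Set.eq_empty_or_nonempty (d i) with hdi | ⟨x0, hx0⟩
  · refine ⟨∅, isClosed_empty, isTotallyDisconnected_empty, ?_⟩
    rw [hdi]
    simp
  · refine ⟨frontier (T i), isClosed_frontier,
      empty_interior_totallyDisconnected ?_, ?_⟩
    · exact interior_frontier (hT i)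
    · ext ⟨x, y⟩
      constructor
      · rintro ⟨hU, hxi, _⟩
        rcases Set.mem_iUnion.1 hU with ⟨j, hxj, hyfr⟩
        have hTT : T j = T i :=
          Set.Subset.antisymm (key j i x hxj hxi) (key i j x hxi hxj)
        exact ⟨hxi, hTT ▸ hyfr⟩
      · rintro ⟨hxi, hyfr⟩
        have hyT : y ∈ T i := (hT i).frontier_subset hyfr
        have : (x, y) ∈ d i ×ˢ T i := ⟨hxi, hyT⟩
        rw [← hprod i] at this
        exact ⟨Set.mem_iUnion.2 ⟨i, hxi, hyfr⟩, hxi, (hsub this.1).2⟩
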